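/- Let C be a finite set with |C| ≥ 2, let {M_c}_{c∈C} be a POVM on ℂ^N, let {E_k}_{k∈K} be a finite Kraus family on ℂ^N with channel E, let ε > 0, and let ρ₁, …, ρ_m be density matrices on ℂ^N. For each i, set p_c^{(i)} := Tr[M_c E(ρ_i)], fix c*_i ∈ C with p_{c*_i}^{(i)} ≥ p_c^{(i)} for all c, and define ε_RLB(ρ_i) := min_{c ≠ c*_i} (1/2)(√(p_{c*_i}^{(i)}) − √(p_c^{(i)}))². Call index i ε-robust if every density matrix σ with 1 − F(ρ_i, σ) ≤ ε satisfies Tr[M_{c*_i} E(σ)] ≥ Tr[M_c E(σ)] for all c ≠ c*_i. Then the number of indices i with ε ≤ ε_RLB(ρ_i) is at most the number of ε-robust indices; consequently 1 − r/m ≤ RA, where r is the number of indices with ε > ε_RLB(ρ_i) and RA is the fraction of ε-robust indices. -/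

import Mathlib

open Matrix
open scoped ComplexOrder

/-- Positive-semidefinite square root of a matrix (zero if not PSD). -/
noncomputable def psdSqrt {N : ℕ} (A : Matrix (Fin N) (Fin N) ℂ) :
    Matrix (Fin N) (Fin N) ℂ :=
  open scoped Classical in
  if h : A.PosSemidef then
    (h.1.eigenvectorUnitary : Matrix (Fin N) (Fin N) ℂ) *
      diagonal ((↑) ∘ (Real.sqrt ·) ∘ h.1.eigenvalues) *
      (star h.1.eigenvectorUnitary : Matrix (Fin N) (Fin N) ℂ)
  else 0

/-- Root fidelity `Tr √(√ρ σ √ρ)`. -/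
noncomputable def rootFidelity {N : ℕ} (ρ σ : Matrix (Fin N) (Fin N) ℂ) : ℝ :=
  (psdSqrt (psdSqrt ρ * σ * psdSqrt ρ)).trace.re

/-- Fidelity `F(ρ,σ) = (Tr √(√ρ σ √ρ))²`. -/
noncomputable def fidelity {N : ℕ} (ρ σ : Matrix (Fin N) (Fin N) ℂ) : ℝ :=
  (rootFidelity ρ σ) ^ 2

/-- A density matrix: positive semidefinite with trace one. -/
def IsDensityMatrix {N : ℕ} (ρ : Matrix (Fin N) (Fin N) ℂ) : Prop :=
  ρ.PosSemidef ∧ ρ.trace = 1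

/-- A POVM: a family of PSD matrices summing to the identity. -/
def IsPOVM {N : ℕ} {C : Type*} [Fintype C] (M : C → Matrix (Fin N) (Fin N) ℂ) : Prop :=
  (∀ c, (M c).PosSemidef) ∧ ∑ c, M c = 1

/-- A Kraus family: `∑ Eₖᴴ Eₖ = I`. -/
def IsKrausFamily {N : ℕ} {K : Type*} [Fintype K] (E : K → Matrix (Fin N) (Fin N) ℂ) : Prop :=
  ∑ k, (E k)ᴴ * E k = 1

/-- The quantum channel associated with a Kraus family. -/
noncomputable def channel {N : ℕ} {K : Type*} [Fintype K]
    (E : K → Matrix (Fin N) (Fin N) ℂ) (σ : Matrix (Fin N) (Fin N) ℂ) :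
    Matrix (Fin N) (Fin N) ℂ :=
  ∑ k, E k * σ * (E k)ᴴ

/-- Minimum of `f` over all labels distinct from `cstar` (needs `|C| ≥ 2`). -/
noncomputable def minErase {C : Type*} [Fintype C] [DecidableEq C] {α : Type*} [LinearOrder α]
    (cstar : C) (h : 1 < Fintype.card C) (f : C → α) : α :=
  (Finset.univ.erase cstar).inf'
    ((Finset.erase_nonempty (Finset.mem_univ cstar)).mpr
      (Finset.one_lt_card_iff_nontrivial.mp (by simpa [Finset.card_univ] using h))) f

/-! ### Auxiliary lemmas -/

section Aux

set_option linter.unusedSectionVars false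
set_option maxHeartbeats 1000000

/-- Cauchy–Schwarz for finite complex sums. -/
lemma URA.sumCS {ι : Type*} [Fintype ι] (x y : ι → ℂ) :
    ‖∑ i, (starRingEnd ℂ) (x i) * y i‖ ≤
      Real.sqrt (∑ i, ‖x i‖^2) * Real.sqrt (∑ i, ‖y i‖^2) := by
  let x' : EuclideanSpace ℂ ι := WithLp.toLp 2 x
  let y' : EuclideanSpace ℂ ι := WithLp.toLp 2 y
  have h1 : (inner ℂ x' y' : ℂ) = ∑ i, (starRingEnd ℂ) (x i) * y i := by
    simp [PiLp.inner_apply, RCLike.inner_apply, x', y', mul_comm]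
  have h2 := norm_inner_le_norm (𝕜 := ℂ) x' y'
  rw [h1, EuclideanSpace.norm_eq, EuclideanSpace.norm_eq] at h2
  simpa using h2

variable {n : Type*} [Fintype n] [DecidableEq n]

noncomputable def Matrix.PosSemidef.sqrt {n : Type*} [Fintype n] [DecidableEq n]
    {A : Matrix n n ℂ} (h : A.PosSemidef) : Matrix n n ℂ :=
  (h.1.eigenvectorUnitary : Matrix n n ℂ) *
    diagonal ((↑) ∘ (Real.sqrt ·) ∘ h.1.eigenvalues) *
    (star h.1.eigenvectorUnitary : Matrix n n ℂ)

theorem Matrix.PosSemidef.posSemidef_sqrt {n : Type*} [Fintype n] [DecidableEq n]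
    {A : Matrix n n ℂ} (hA : A.PosSemidef) : hA.sqrt.PosSemidef := by
  refine PosSemidef.mul_mul_conjTranspose_same ?_ _
  refine posSemidef_diagonal_iff.mpr fun i => ?_
  simp only [Function.comp_apply]
  exact Complex.zero_le_real.mpr (Real.sqrt_nonneg _)

theorem Matrix.PosSemidef.sqrt_mul_self {n : Type*} [Fintype n] [DecidableEq n]
    {A : Matrix n n ℂ} (hA : A.PosSemidef) : hA.sqrt * hA.sqrt = A := by
  have hU : (star hA.1.eigenvectorUnitary : Matrix n n ℂ) * hA.1.eigenvectorUnitary = 1 :=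
    Unitary.coe_star_mul_self _
  have hD : diagonal (((↑) : ℝ → ℂ) ∘ (Real.sqrt ·) ∘ hA.1.eigenvalues) *
      diagonal (((↑) : ℝ → ℂ) ∘ (Real.sqrt ·) ∘ hA.1.eigenvalues) =
      diagonal (RCLike.ofReal ∘ hA.1.eigenvalues) := by
    rw [diagonal_mul_diagonal]
    congr 1
    funext i
    simp only [Function.comp_apply]
    rw [← Complex.ofReal_mul, Real.mul_self_sqrt (hA.eigenvalues_nonneg i)]
    rfl
  conv_rhs => rw [hA.1.spectral_theorem, Unitary.conjStarAlgAut_apply]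
  rw [Matrix.PosSemidef.sqrt]
  simp only [mul_assoc]
  rw [← mul_assoc (star (hA.1.eigenvectorUnitary) : Matrix n n ℂ), hU, one_mul,
    ← mul_assoc (diagonal _) (diagonal _), hD]

lemma URA.traceForm (X Y : Matrix n n ℂ) :
    (Xᴴ * Y).trace = ∑ p : n × n, (starRingEnd ℂ) (X p.1 p.2) * Y p.1 p.2 := by
  rw [Matrix.trace, Fintype.sum_prod_type]
  simp only [Matrix.diag_apply, Matrix.mul_apply, Matrix.conjTranspose_apply]
  rw [Finset.sum_comm]
  rfl

lemma URA.traceSelf (X : Matrix n n ℂ) :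
    (Xᴴ * X).trace = ((∑ p : n × n, ‖X p.1 p.2‖^2 : ℝ) : ℂ) := by
  rw [URA.traceForm]
  push_cast
  congr 1; ext p
  rw [Complex.conj_mul']

lemma URA.traceCS (X Y : Matrix n n ℂ) :
    ‖(Xᴴ * Y).trace‖ ≤ Real.sqrt ((Xᴴ*X).trace.re) * Real.sqrt ((Yᴴ*Y).trace.re) := by
  have hx : (Xᴴ*X).trace.re = ∑ p : n × n, ‖X p.1 p.2‖^2 := by
    rw [URA.traceSelf]; simp [← Complex.ofReal_pow]
  have hy : (Yᴴ*Y).trace.re = ∑ p : n × n, ‖Y p.1 p.2‖^2 := by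
    rw [URA.traceSelf]; simp [← Complex.ofReal_pow]
  rw [hx, hy, URA.traceForm]
  exact URA.sumCS _ _

lemma URA.traceSelf_nonneg (X : Matrix n n ℂ) : 0 ≤ (Xᴴ * X).trace := by
  rw [URA.traceSelf, Complex.nonneg_iff]
  constructor
  · simp only [← Complex.ofReal_pow, Complex.zero_re, ← Complex.ofReal_sum, Complex.ofReal_re]
    positivity
  · simp [← Complex.ofReal_pow, ← Complex.ofReal_sum]

lemma URA.psd_trace_mul_nonneg {P Q : Matrix n n ℂ} (hP : P.PosSemidef) (hQ : Q.PosSemidef) :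
    0 ≤ (P * Q).trace := by
  have key : (P * Q).trace = ((hQ.sqrt * hP.sqrt)ᴴ * (hQ.sqrt * hP.sqrt)).trace := by
    have h1 : (hQ.sqrt * hP.sqrt)ᴴ = hP.sqrt * hQ.sqrt := by
      rw [conjTranspose_mul, hP.posSemidef_sqrt.1, hQ.posSemidef_sqrt.1]
    have h2 : (hQ.sqrt * hP.sqrt)ᴴ * (hQ.sqrt * hP.sqrt) = hP.sqrt * (Q * hP.sqrt) := by
      rw [h1, mul_assoc, ← mul_assoc hQ.sqrt, hQ.sqrt_mul_self]
    have e1 : P * Q = hP.sqrt * (hP.sqrt * Q) := by rw [← mul_assoc, hP.sqrt_mul_self]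
    rw [h2, e1, trace_mul_comm, mul_assoc, trace_mul_comm]
  rw [key]; exact URA.traceSelf_nonneg _

lemma URA.psd_trace_nonneg {P : Matrix n n ℂ} (hP : P.PosSemidef) : 0 ≤ P.trace := by
  have := URA.psd_trace_mul_nonneg hP (Matrix.PosSemidef.one (n := n) (R := ℂ))
  simpa using this

lemma URA.cplx_nonneg_decomp {z : ℂ} (h : 0 ≤ z) : z = (z.re : ℂ) ∧ 0 ≤ z.re := by
  rw [Complex.nonneg_iff] at h
  exact ⟨Complex.ext (by simp) (by simp [← h.2]), h.1⟩

noncomputable def URA.vnorm2 (v : n → ℂ) : ℝ := ∑ i, ‖v i‖^2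

lemma URA.vnorm2_nonneg (v : n → ℂ) : 0 ≤ URA.vnorm2 v := by
  unfold URA.vnorm2; positivity

lemma URA.star_dot_self (v : n → ℂ) : star v ⬝ᵥ v = ((URA.vnorm2 v : ℝ) : ℂ) := by
  simp only [dotProduct, Pi.star_apply, URA.vnorm2]
  push_cast
  congr 1; ext i
  rw [← Complex.conj_mul']
  rfl

lemma URA.vecCS (u w : n → ℂ) :
    ‖star u ⬝ᵥ w‖ ≤ Real.sqrt (URA.vnorm2 u) * Real.sqrt (URA.vnorm2 w) := by
  have : star u ⬝ᵥ w = ∑ i, (starRingEnd ℂ) (u i) * w i := rfl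
  rw [this, URA.vnorm2, URA.vnorm2]
  exact URA.sumCS u w

lemma URA.dot_mulVec_self (Z : Matrix n n ℂ) (y : n → ℂ) :
    star y ⬝ᵥ ((Z * Zᴴ) *ᵥ y) = ((URA.vnorm2 (Zᴴ *ᵥ y) : ℝ) : ℂ) := by
  rw [← mulVec_mulVec, ← URA.star_dot_self, star_mulVec, conjTranspose_conjTranspose,
    dotProduct_mulVec]

/-- If `1 - ZZᴴ ⪰ 0` then `1 - ZᴴZ ⪰ 0`. -/
lemma URA.contraction_flip {Z : Matrix n n ℂ} (h : (1 - Z * Zᴴ).PosSemidef) :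
    (1 - Zᴴ * Z).PosSemidef := by
  have hnorm : ∀ y : n → ℂ, URA.vnorm2 (Zᴴ *ᵥ y) ≤ URA.vnorm2 y := by
    intro y
    have h2 := h.dotProduct_mulVec_nonneg y
    rw [sub_mulVec, dotProduct_sub, one_mulVec, URA.star_dot_self, URA.dot_mulVec_self,
      ← Complex.ofReal_sub, Complex.nonneg_iff] at h2
    simpa using h2.1
  refine posSemidef_iff_dotProduct_mulVec.mpr ⟨?_, ?_⟩
  · exact isHermitian_one.sub (isHermitian_conjTranspose_mul_self Z)
  · intro x
    have key : URA.vnorm2 (Z *ᵥ x) ≤ URA.vnorm2 x := by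
      have e1 : star (Z *ᵥ x) ⬝ᵥ (Z *ᵥ x) = star x ⬝ᵥ (Zᴴ *ᵥ (Z *ᵥ x)) := by
        rw [star_mulVec, ← dotProduct_mulVec]
      have e2 : (URA.vnorm2 (Z *ᵥ x) : ℝ) = ‖star x ⬝ᵥ (Zᴴ *ᵥ (Z *ᵥ x))‖ := by
        rw [← e1, URA.star_dot_self, Complex.norm_real, Real.norm_eq_abs,
          abs_of_nonneg (URA.vnorm2_nonneg _)]
      have e3 := URA.vecCS x (Zᴴ *ᵥ (Z *ᵥ x))
      have e4 : Real.sqrt (URA.vnorm2 (Zᴴ *ᵥ (Z *ᵥ x))) ≤ Real.sqrt (URA.vnorm2 (Z *ᵥ x)) :=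
        Real.sqrt_le_sqrt (hnorm _)
      have e5 : URA.vnorm2 (Z *ᵥ x) ≤ Real.sqrt (URA.vnorm2 x) * Real.sqrt (URA.vnorm2 (Z *ᵥ x)) := by
        calc URA.vnorm2 (Z *ᵥ x) = ‖star x ⬝ᵥ (Zᴴ *ᵥ (Z *ᵥ x))‖ := e2
        _ ≤ Real.sqrt (URA.vnorm2 x) * Real.sqrt (URA.vnorm2 (Zᴴ *ᵥ (Z *ᵥ x))) := e3
        _ ≤ _ := mul_le_mul_of_nonneg_left e4 (Real.sqrt_nonneg _)
      nlinarith [Real.sqrt_nonneg (URA.vnorm2 (Z *ᵥ x)), Real.sqrt_nonneg (URA.vnorm2 x),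
        Real.sq_sqrt (URA.vnorm2_nonneg x), Real.sq_sqrt (URA.vnorm2_nonneg (Z *ᵥ x))]
    rw [sub_mulVec, dotProduct_sub, one_mulVec, URA.star_dot_self]
    have e6 : star x ⬝ᵥ ((Zᴴ * Z) *ᵥ x) = ((URA.vnorm2 (Z *ᵥ x) : ℝ) : ℂ) := by
      have := URA.dot_mulVec_self Zᴴ x
      rwa [conjTranspose_conjTranspose] at this
    rw [e6, ← Complex.ofReal_sub, Complex.nonneg_iff]
    exact ⟨by simpa using key, by simp⟩

/-- Polar-decomposition-style construction: a contraction `U` with `U M = √(MᴴM)`. -/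
lemma URA.exists_good_U (M : Matrix n n ℂ) :
    ∃ U : Matrix n n ℂ, (1 - Uᴴ * U).PosSemidef ∧
      U * M = (posSemidef_conjTranspose_mul_self M).sqrt := by
  set H : Matrix n n ℂ := Mᴴ * M with hHdef
  have hH : H.PosSemidef := posSemidef_conjTranspose_mul_self M
  set V : Matrix n n ℂ := (hH.1.eigenvectorUnitary : Matrix n n ℂ) with hVdef
  set e : n → ℝ := hH.1.eigenvalues with hedef
  have hV1 : Vᴴ * V = 1 := by
    rw [hVdef, ← star_eq_conjTranspose]; exact Unitary.coe_star_mul_self _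
  have hV2 : V * Vᴴ = 1 := by
    rw [hVdef, ← star_eq_conjTranspose]; exact Unitary.coe_mul_star_self _
  have hspec : H = V * diagonal (fun i => ((e i : ℝ) : ℂ)) * Vᴴ := by
    have := hH.1.spectral_theorem
    rw [Unitary.conjStarAlgAut_apply] at this
    rw [← star_eq_conjTranspose]
    exact this
  have he0 : ∀ i, 0 ≤ e i := fun i => hH.eigenvalues_nonneg i
  have sand : ∀ a b : n → ℂ, (V * diagonal a * Vᴴ) * (V * diagonal b * Vᴴ)
      = V * diagonal (fun i => a i * b i) * Vᴴ := by
    intro a b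
    calc (V * diagonal a * Vᴴ) * (V * diagonal b * Vᴴ)
        = V * diagonal a * (Vᴴ * V) * diagonal b * Vᴴ := by
          simp only [mul_assoc]
      _ = V * diagonal (fun i => a i * b i) * Vᴴ := by
          rw [hV1, mul_one, mul_assoc, mul_assoc, ← mul_assoc (diagonal a),
            diagonal_mul_diagonal, mul_assoc]
  set g : ℝ → ℝ := fun t => if 0 < t then (Real.sqrt t)⁻¹ else 0 with hgdef
  set F : Matrix n n ℂ := V * diagonal (fun i => ((g (e i) : ℝ) : ℂ)) * Vᴴ with hFdef
  set W : Matrix n n ℂ := V * diagonal (fun i => ((Real.sqrt (e i) : ℝ) : ℂ)) * Vᴴ with hWdef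
  have hWpsd : W.PosSemidef := by
    refine PosSemidef.mul_mul_conjTranspose_same ?_ V
    refine posSemidef_diagonal_iff.mpr fun i => ?_
    rw [Complex.le_def]
    simp [Real.sqrt_nonneg]
  have hW2 : W ^ 2 = H := by
    have harr : (fun i => ((Real.sqrt (e i) : ℝ) : ℂ) * ((Real.sqrt (e i) : ℝ) : ℂ))
        = fun i => ((e i : ℝ) : ℂ) := by
      funext i
      rw [← Complex.ofReal_mul, Real.mul_self_sqrt (he0 i)]
    rw [pow_two, hWdef, sand, harr, ← hspec]
  have hWsqrt : W = hH.sqrt := rfl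
  have hgmul : ∀ t : ℝ, 0 ≤ t → g t * t = Real.sqrt t := by
    intro t ht
    rcases lt_or_eq_of_le ht with h | h
    · have hs : Real.sqrt t * Real.sqrt t = t := Real.mul_self_sqrt (le_of_lt h)
      have hne : Real.sqrt t ≠ 0 := ne_of_gt (Real.sqrt_pos.mpr h)
      rw [hgdef]
      simp only [if_pos h]
      rw [inv_mul_eq_div, div_eq_iff hne]
      exact hs.symm
    · rw [hgdef, ← h]
      simp
  have hFH : F * H = W := by
    have harr : (fun i => ((g (e i) : ℝ) : ℂ) * ((e i : ℝ) : ℂ))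
        = fun i => ((Real.sqrt (e i) : ℝ) : ℂ) := by
      funext i
      rw [← Complex.ofReal_mul, hgmul (e i) (he0 i)]
    conv_lhs => rw [hFdef, hspec]
    rw [sand, harr, ← hWdef]
  have hFherm : Fᴴ = F := by
    have hd : star (fun i => ((g (e i) : ℝ) : ℂ)) = fun i => ((g (e i) : ℝ) : ℂ) := by
      funext i
      simp [Complex.conj_ofReal]
    rw [hFdef, conjTranspose_mul, conjTranspose_mul, conjTranspose_conjTranspose,
      diagonal_conjTranspose, hd, ← mul_assoc]
  refine ⟨F * Mᴴ, ?_, ?_⟩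
  · refine URA.contraction_flip ?_
    have hUH : (F * Mᴴ)ᴴ = M * F := by
      rw [conjTranspose_mul, conjTranspose_conjTranspose, hFherm]
    have hUU : F * Mᴴ * (F * Mᴴ)ᴴ = V * diagonal
        (fun i => ((if 0 < e i then (1:ℝ) else 0 : ℝ) : ℂ)) * Vᴴ := by
      rw [hUH]
      have e1 : F * Mᴴ * (M * F) = (F * H) * F := by
        rw [hHdef]
        simp only [mul_assoc]
      have harr : (fun i => ((Real.sqrt (e i) : ℝ) : ℂ) * ((g (e i) : ℝ) : ℂ))
          = fun i => ((if 0 < e i then (1:ℝ) else 0 : ℝ) : ℂ) := by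
        funext i
        rw [← Complex.ofReal_mul]
        congr 1
        rcases lt_or_eq_of_le (he0 i) with h | h
        · have hne : Real.sqrt (e i) ≠ 0 := ne_of_gt (Real.sqrt_pos.mpr h)
          rw [hgdef]
          simp only [if_pos h]
          rw [mul_inv_cancel₀ hne]
        · rw [hgdef, ← h]
          simp
      rw [e1, hFH, hWdef, hFdef, sand, harr]
    rw [hUU]
    have hone : (1 : Matrix n n ℂ) = V * diagonal (fun _ => ((1:ℝ) : ℂ)) * Vᴴ := by
      have : diagonal (fun _ : n => ((1:ℝ) : ℂ)) = 1 := by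
        simp [diagonal_one]
      rw [this, mul_one, hV2]
    rw [hone]
    have : V * diagonal (fun _ => ((1:ℝ) : ℂ)) * Vᴴ -
        V * diagonal (fun i => ((if 0 < e i then (1:ℝ) else 0 : ℝ) : ℂ)) * Vᴴ
        = V * diagonal (fun i => ((1 - if 0 < e i then (1:ℝ) else 0 : ℝ) : ℂ)) * Vᴴ := by
      rw [← sub_mul, ← mul_sub, diagonal_sub]
      congr 2
      funext i
      push_cast
      ring
    rw [this]
    refine PosSemidef.mul_mul_conjTranspose_same ?_ V
    refine posSemidef_diagonal_iff.mpr fun i => ?_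
    rw [Complex.le_def]
    constructor
    · simp only [Complex.ofReal_re, Complex.zero_re]
      split <;> norm_num
    · simp
  · calc F * Mᴴ * M = F * H := by rw [hHdef, mul_assoc]
      _ = W := hFH
      _ = hH.sqrt := hWsqrt

lemma URA.sqrt_congr {X Y : Matrix n n ℂ} (hX : X.PosSemidef) (hY : Y.PosSemidef) (h : X = Y) :
    hX.sqrt = hY.sqrt := by subst h; rfl

lemma URA.psdSqrt_of_psd {N : ℕ} {A : Matrix (Fin N) (Fin N) ℂ} (hA : A.PosSemidef) :
    psdSqrt A = hA.sqrt := by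
  rw [psdSqrt, dif_pos hA, Matrix.PosSemidef.sqrt]

lemma URA.psdSqrt_psd {N : ℕ} (A : Matrix (Fin N) (Fin N) ℂ) : (psdSqrt A).PosSemidef := by
  rw [psdSqrt]
  split
  · exact Matrix.PosSemidef.posSemidef_sqrt ‹_›
  · exact Matrix.PosSemidef.zero

lemma URA.rootFidelity_nonneg {N : ℕ} (ρ σ : Matrix (Fin N) (Fin N) ℂ) :
    0 ≤ rootFidelity ρ σ := by
  rw [rootFidelity]
  have h := URA.psd_trace_nonneg (URA.psdSqrt_psd (psdSqrt ρ * σ * psdSqrt ρ))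
  rw [Complex.nonneg_iff] at h
  exact h.1

/-- The measured (classical) root fidelity dominates the quantum root fidelity. -/
lemma URA.measured_bound {N : ℕ} {C : Type*} [Fintype C] (ρ σ : Matrix (Fin N) (Fin N) ℂ)
    (hρ : ρ.PosSemidef) (hσ : σ.PosSemidef) (W : C → Matrix (Fin N) (Fin N) ℂ)
    (hW : ∀ c, (W c).PosSemidef) (hW1 : ∑ c, W c = 1) :
    rootFidelity ρ σ ≤ ∑ c, Real.sqrt ((W c * ρ).trace.re) * Real.sqrt ((W c * σ).trace.re) := by
  set A : Matrix (Fin N) (Fin N) ℂ := psdSqrt ρ with hAdef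
  set B : Matrix (Fin N) (Fin N) ℂ := psdSqrt σ with hBdef
  have hAp : A.PosSemidef := by rw [hAdef, URA.psdSqrt_of_psd hρ]; exact hρ.posSemidef_sqrt
  have hBp : B.PosSemidef := by rw [hBdef, URA.psdSqrt_of_psd hσ]; exact hσ.posSemidef_sqrt
  have hAH : Aᴴ = A := hAp.1
  have hBH : Bᴴ = B := hBp.1
  have hA2 : A * A = ρ := by rw [hAdef, URA.psdSqrt_of_psd hρ]; exact hρ.sqrt_mul_self
  have hB2 : B * B = σ := by rw [hBdef, URA.psdSqrt_of_psd hσ]; exact hσ.sqrt_mul_self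
  set M : Matrix (Fin N) (Fin N) ℂ := B * A with hMdef
  have hMH : Mᴴ = A * B := by rw [hMdef, conjTranspose_mul, hAH, hBH]
  have hX : (A * σ * A).PosSemidef := by
    have := hσ.conjTranspose_mul_mul_same A
    rwa [hAH] at this
  have hHeq : Mᴴ * M = A * σ * A := by
    rw [hMH, hMdef, mul_assoc, ← mul_assoc B B, hB2, ← mul_assoc]
  have hrf : rootFidelity ρ σ = ((posSemidef_conjTranspose_mul_self M).sqrt).trace.re := by
    rw [rootFidelity, ← hAdef, URA.psdSqrt_of_psd hX,
      URA.sqrt_congr (posSemidef_conjTranspose_mul_self M) hX hHeq]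
  obtain ⟨U, hU, hUM⟩ := URA.exists_good_U M
  rw [hrf, ← hUM]
  have hsum : U * M = ∑ c, U * B * W c * A := by
    calc U * M = U * B * (∑ c, W c) * A := by rw [hW1, mul_one, hMdef, mul_assoc]
      _ = ∑ c, U * B * W c * A := by rw [Finset.mul_sum, Finset.sum_mul]
  rw [hsum, trace_sum]
  rw [Complex.re_sum]
  refine Finset.sum_le_sum fun c _ => ?_
  set R : Matrix (Fin N) (Fin N) ℂ := psdSqrt (W c) with hRdef
  have hRp : R.PosSemidef := by
    rw [hRdef, URA.psdSqrt_of_psd (hW c)]; exact (hW c).posSemidef_sqrt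
  have hRH : Rᴴ = R := hRp.1
  have hR2 : R * R = W c := by rw [hRdef, URA.psdSqrt_of_psd (hW c)]; exact (hW c).sqrt_mul_self
  set X : Matrix (Fin N) (Fin N) ℂ := R * B * Uᴴ with hXdef
  set Y : Matrix (Fin N) (Fin N) ℂ := R * A with hYdef
  have hXY : Xᴴ * Y = U * B * W c * A := by
    rw [hXdef, hYdef, conjTranspose_mul, conjTranspose_mul, conjTranspose_conjTranspose,
      hRH, hBH, ← hR2]
    noncomm_ring
  have hYYm : Yᴴ * Y = A * W c * A := by
    rw [hYdef, conjTranspose_mul, hRH, hAH, ← hR2]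
    noncomm_ring
  have hYY : (Yᴴ * Y).trace = (W c * ρ).trace := by
    rw [hYYm, trace_mul_comm, ← mul_assoc, hA2, trace_mul_comm]
  have hXXle : (Xᴴ * X).trace.re ≤ (W c * σ).trace.re := by
    have hXX : Xᴴ * X = U * (B * W c * B) * Uᴴ := by
      rw [hXdef, conjTranspose_mul, conjTranspose_mul, conjTranspose_conjTranspose,
        hRH, hBH, ← hR2]
      noncomm_ring
    have hS : (B * W c * B).PosSemidef := by
      have := (hW c).conjTranspose_mul_mul_same B
      rwa [hBH] at this
    have key : 0 ≤ (B * W c * B).trace - (Xᴴ * X).trace := by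
      have e1 : (Xᴴ * X).trace = ((Uᴴ * U) * (B * W c * B)).trace := by
        rw [hXX, trace_mul_comm, ← mul_assoc, ← mul_assoc]
      have e2 : (B * W c * B).trace - (Xᴴ * X).trace
          = ((1 - Uᴴ * U) * (B * W c * B)).trace := by
        rw [e1, sub_mul, one_mul, trace_sub]
      rw [e2]
      exact URA.psd_trace_mul_nonneg hU hS
    have e3 : (B * W c * B).trace = (W c * σ).trace := by
      rw [mul_assoc, trace_mul_comm, mul_assoc, hB2]
    rw [Complex.le_def] at key
    have := key.1
    simp only [Complex.zero_re, Complex.sub_re] at this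
    rw [e3] at this
    linarith
  calc (U * B * W c * A).trace.re ≤ ‖(U * B * W c * A).trace‖ := Complex.re_le_norm _
    _ = ‖(Xᴴ * Y).trace‖ := by rw [hXY]
    _ ≤ Real.sqrt ((Xᴴ*X).trace.re) * Real.sqrt ((Yᴴ*Y).trace.re) := URA.traceCS X Y
    _ ≤ Real.sqrt ((W c * σ).trace.re) * Real.sqrt ((W c * ρ).trace.re) := by
        rw [hYY]
        exact mul_le_mul_of_nonneg_right (Real.sqrt_le_sqrt hXXle) (Real.sqrt_nonneg _)
    _ = _ := mul_comm _ _

/-- Two-term Cauchy-Schwarz for nonneg reals. -/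
lemma URA.two_cs {u v c d : ℝ} (hu : 0 ≤ u) (hv : 0 ≤ v) (hc : 0 ≤ c) (hd : 0 ≤ d) :
    u * v + c * d ≤ Real.sqrt (u^2 + c^2) * Real.sqrt (v^2 + d^2) := by
  have h1 : (u * v + c * d)^2 ≤ (u^2 + c^2) * (v^2 + d^2) := by nlinarith [sq_nonneg (u*d - c*v)]
  have h2 : 0 ≤ u * v + c * d := by positivity
  calc u * v + c * d = Real.sqrt ((u * v + c * d)^2) := by rw [Real.sqrt_sq h2]
    _ ≤ Real.sqrt ((u^2 + c^2) * (v^2 + d^2)) := Real.sqrt_le_sqrt h1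
    _ = _ := by rw [Real.sqrt_mul (by positivity)]

/-- Classical robustness bound for probability vectors. -/
lemma URA.classical_bound {C : Type*} [Fintype C] [DecidableEq C]
    (p q : C → ℝ) (hp0 : ∀ c, 0 ≤ p c) (hq0 : ∀ c, 0 ≤ q c)
    (hp1 : ∑ c, p c = 1) (hq1 : ∑ c, q c = 1)
    (cs ct : C) (hne : ct ≠ cs)
    (hblt : Real.sqrt (p ct) < Real.sqrt (p cs))
    (hcon : q cs < q ct) :
    (∑ c, Real.sqrt (p c) * Real.sqrt (q c))^2
      < 1 - (Real.sqrt (p cs) - Real.sqrt (p ct))^2 / 2 := by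
  set a := Real.sqrt (p cs) with hadef
  set b := Real.sqrt (p ct) with hbdef
  set x := Real.sqrt (q cs) with hxdef
  set y := Real.sqrt (q ct) with hydef
  have hxy : x < y := Real.sqrt_lt_sqrt (hq0 cs) hcon
  have ha0 : 0 ≤ a := Real.sqrt_nonneg _
  have hb0 : 0 ≤ b := Real.sqrt_nonneg _
  have hx0 : 0 ≤ x := Real.sqrt_nonneg _
  have hy0 : 0 ≤ y := Real.sqrt_nonneg _
  have ha2 : a^2 = p cs := Real.sq_sqrt (hp0 cs)
  have hb2 : b^2 = p ct := Real.sq_sqrt (hp0 ct)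
  have hx2 : x^2 = q cs := Real.sq_sqrt (hq0 cs)
  have hy2 : y^2 = q ct := Real.sq_sqrt (hq0 ct)
  have hmem : ct ∈ Finset.univ.erase cs := Finset.mem_erase.mpr ⟨hne, Finset.mem_univ ct⟩
  set s : Finset C := (Finset.univ.erase cs).erase ct with hsdef
  have hsplit : ∀ f : C → ℝ, ∑ c, f c = f cs + (f ct + ∑ c ∈ s, f c) := by
    intro f
    rw [← Finset.add_sum_erase _ f (Finset.mem_univ cs), ← Finset.add_sum_erase _ f hmem]
  set P := ∑ c ∈ s, p c with hPdef
  set Q := ∑ c ∈ s, q c with hQdef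
  have hP0 : 0 ≤ P := Finset.sum_nonneg fun c _ => hp0 c
  have hQ0 : 0 ≤ Q := Finset.sum_nonneg fun c _ => hq0 c
  have hPeq : a^2 + b^2 + P = 1 := by rw [ha2, hb2, hPdef]; have := hsplit p; linarith [hp1]
  have hQeq : x^2 + y^2 + Q = 1 := by rw [hx2, hy2, hQdef]; have := hsplit q; linarith [hq1]
  have hR : ∑ c ∈ s, Real.sqrt (p c) * Real.sqrt (q c) ≤ Real.sqrt P * Real.sqrt Q :=
    Real.sum_sqrt_mul_sqrt_le s hp0 hq0
  have hstrict : a * x + b * y < (a + b) / Real.sqrt 2 * ((x + y) / Real.sqrt 2) := by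
    have h2 : Real.sqrt 2 * Real.sqrt 2 = 2 := Real.mul_self_sqrt (by norm_num)
    have : (a + b) / Real.sqrt 2 * ((x + y) / Real.sqrt 2) = (a + b) * (x + y) / 2 := by
      rw [div_mul_div_comm, h2]
    rw [this]
    nlinarith [hxy, hblt]
  set u := (a + b) / Real.sqrt 2 with hudef
  set v := (x + y) / Real.sqrt 2 with hvdef
  have hu0 : 0 ≤ u := by positivity
  have hv0 : 0 ≤ v := by positivity
  have hu2 : u^2 = (a + b)^2 / 2 := by
    rw [hudef, div_pow, Real.sq_sqrt (by norm_num : (0:ℝ) ≤ 2)]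
  have hv2 : v^2 = (x + y)^2 / 2 := by
    rw [hvdef, div_pow, Real.sq_sqrt (by norm_num : (0:ℝ) ≤ 2)]
  have hcs2 : u * v + Real.sqrt P * Real.sqrt Q
      ≤ Real.sqrt (u^2 + Real.sqrt P^2) * Real.sqrt (v^2 + Real.sqrt Q^2) :=
    URA.two_cs hu0 hv0 (Real.sqrt_nonneg _) (Real.sqrt_nonneg _)
  rw [Real.sq_sqrt hP0, Real.sq_sqrt hQ0] at hcs2
  have hfin1 : u^2 + P = 1 - (a - b)^2 / 2 := by rw [hu2]; nlinarith [hPeq]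
  have hfin2 : v^2 + Q ≤ 1 := by rw [hv2]; nlinarith [hQeq, sq_nonneg (x - y)]
  have hS : ∑ c, Real.sqrt (p c) * Real.sqrt (q c)
      < Real.sqrt (1 - (a - b)^2 / 2) := by
    calc ∑ c, Real.sqrt (p c) * Real.sqrt (q c)
        = a * x + (b * y + ∑ c ∈ s, Real.sqrt (p c) * Real.sqrt (q c)) := by
          rw [hsplit (fun c => Real.sqrt (p c) * Real.sqrt (q c))]
      _ ≤ a * x + b * y + Real.sqrt P * Real.sqrt Q := by linarith [hR]
      _ < u * v + Real.sqrt P * Real.sqrt Q := by linarith [hstrict]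
      _ ≤ Real.sqrt (u^2 + P) * Real.sqrt (v^2 + Q) := hcs2
      _ ≤ Real.sqrt (1 - (a - b)^2 / 2) * Real.sqrt 1 := by
          rw [hfin1]
          exact mul_le_mul_of_nonneg_left (Real.sqrt_le_sqrt hfin2) (Real.sqrt_nonneg _)
      _ = Real.sqrt (1 - (a - b)^2 / 2) := by rw [Real.sqrt_one, mul_one]
  have hS0 : 0 ≤ ∑ c, Real.sqrt (p c) * Real.sqrt (q c) :=
    Finset.sum_nonneg fun c _ => by positivity
  have hc0 : 0 ≤ 1 - (a - b)^2 / 2 := by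
    by_contra h
    push_neg at h
    rw [Real.sqrt_eq_zero'.mpr (le_of_lt h)] at hS
    linarith
  calc (∑ c, Real.sqrt (p c) * Real.sqrt (q c))^2
      < Real.sqrt (1 - (a - b)^2 / 2)^2 := by
        apply sq_lt_sq' _ hS
        linarith [Real.sqrt_nonneg (1 - (a - b)^2 / 2)]
    _ = 1 - (a - b)^2 / 2 := Real.sq_sqrt hc0

end Aux

open scoped Classical in
/-- **Soundness of the under-approximate robust accuracy.** Every index certified by
the robustness lower bound is ε-robust, hence the under-approximate robust accuracy
`URA = 1 − r/m` is at most the true robust accuracy `RA`. -/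
theorem under_robust_accuracy_sound
    {N m : ℕ} {C K : Type*} [Fintype C] [DecidableEq C] [Fintype K]
    (hC : 1 < Fintype.card C) (hm : 0 < m)
    (M : C → Matrix (Fin N) (Fin N) ℂ) (hM : IsPOVM M)
    (E : K → Matrix (Fin N) (Fin N) ℂ) (hE : IsKrausFamily E)
    (ε : ℝ) (hε : 0 < ε)
    (ρ : Fin m → Matrix (Fin N) (Fin N) ℂ) (hρ : ∀ i, IsDensityMatrix (ρ i))
    (p : Fin m → C → ℝ) (hp : ∀ i c, ((p i c : ℂ)) = (M c * channel E (ρ i)).trace)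
    (cstar : Fin m → C) (hcstar : ∀ i c, p i c ≤ p i (cstar i))
    (εRLB : Fin m → ℝ)
    (hRLB : ∀ i, εRLB i = minErase (cstar i) hC
      fun c => (1 / 2) * (Real.sqrt (p i (cstar i)) - Real.sqrt (p i c)) ^ 2)
    (Robust : Fin m → Prop)
    (hRobust : ∀ i, Robust i ↔
      ∀ σ : Matrix (Fin N) (Fin N) ℂ, IsDensityMatrix σ → 1 - fidelity (ρ i) σ ≤ ε →
        ∀ c, c ≠ cstar i →
          (M c * channel E σ).trace ≤ (M (cstar i) * channel E σ).trace) :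
    (Finset.univ.filter fun i => ε ≤ εRLB i).card ≤
        (Finset.univ.filter fun i => Robust i).card ∧
      1 - ((Finset.univ.filter fun i => ε > εRLB i).card : ℝ) / m ≤
        ((Finset.univ.filter fun i => Robust i).card : ℝ) / m := by
  -- the effective POVM after the channel
  set Nc : C → Matrix (Fin N) (Fin N) ℂ := fun c => ∑ k, (E k)ᴴ * M c * E k with hNcdef
  have hNpsd : ∀ c, (Nc c).PosSemidef := by
    intro c
    refine Finset.sum_induction _ _ (fun a b ha hb => ha.add hb) Matrix.PosSemidef.zero ?_
    intro k _
    exact (hM.1 c).conjTranspose_mul_mul_same (E k)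
  have hNsum : ∑ c, Nc c = 1 := by
    calc ∑ c, Nc c = ∑ k, ∑ c, (E k)ᴴ * M c * E k := Finset.sum_comm
      _ = ∑ k, (E k)ᴴ * E k := by
          refine Finset.sum_congr rfl fun k _ => ?_
          rw [← Finset.sum_mul, ← Finset.mul_sum, hM.2, mul_one]
      _ = 1 := hE
  have htr : ∀ (c : C) (τ : Matrix (Fin N) (Fin N) ℂ),
      (M c * channel E τ).trace = (Nc c * τ).trace := by
    intro c τ
    rw [channel, Finset.mul_sum, trace_sum, hNcdef]
    rw [Finset.sum_mul, trace_sum]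
    refine Finset.sum_congr rfl fun k _ => ?_
    have e1 : M c * (E k * τ * (E k)ᴴ) = M c * E k * τ * (E k)ᴴ := by noncomm_ring
    have e2 : (E k)ᴴ * (M c * E k * τ) = (E k)ᴴ * M c * E k * τ := by noncomm_ring
    rw [e1, trace_mul_comm, e2]
  -- the key soundness claim
  have key : ∀ i, ε ≤ εRLB i → Robust i := by
    intro i hi
    rw [hRobust]
    intro σ hσ hfidle c hcne
    set q : C → ℝ := fun c => (Nc c * σ).trace.re with hqdef
    have hqc : ∀ c, ((q c : ℝ) : ℂ) = (Nc c * σ).trace ∧ 0 ≤ q c := by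
      intro c
      have h0 := URA.psd_trace_mul_nonneg (hNpsd c) hσ.1
      have := URA.cplx_nonneg_decomp h0
      exact ⟨this.1.symm, this.2⟩
    have hpc : ∀ c', p i c' = (Nc c' * ρ i).trace.re := by
      intro c'
      have := hp i c'
      rw [htr c' (ρ i)] at this
      rw [← this, Complex.ofReal_re]
    have hpc0 : ∀ c', 0 ≤ p i c' := by
      intro c'
      rw [hpc c']
      exact (URA.cplx_nonneg_decomp (URA.psd_trace_mul_nonneg (hNpsd c') (hρ i).1)).2
    have hpsum : ∑ c', p i c' = 1 := by
      have : ((∑ c', p i c' : ℝ) : ℂ) = 1 := by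
        push_cast
        rw [show ∑ c', ((p i c' : ℝ) : ℂ) = ∑ c', (Nc c' * ρ i).trace from
          Finset.sum_congr rfl fun c' _ => by rw [hp i c', htr c' (ρ i)]]
        rw [← trace_sum, ← Finset.sum_mul, hNsum, one_mul]
        exact (hρ i).2
      exact_mod_cast this
    have hqsum : ∑ c', q c' = 1 := by
      have : ((∑ c', q c' : ℝ) : ℂ) = 1 := by
        push_cast
        rw [show ∑ c', ((q c' : ℝ) : ℂ) = ∑ c', (Nc c' * σ).trace from
          Finset.sum_congr rfl fun c' _ => (hqc c').1]
        rw [← trace_sum, ← Finset.sum_mul, hNsum, one_mul]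
        exact hσ.2
      exact_mod_cast this
    -- reduce the goal to a real inequality
    rw [htr c σ, htr (cstar i) σ, ← (hqc c).1, ← (hqc (cstar i)).1]
    rw [Complex.real_le_real]
    by_contra hcon
    push_neg at hcon
    -- the robustness radius bound at c
    have hi' : ε ≤ (1 / 2) * (Real.sqrt (p i (cstar i)) - Real.sqrt (p i c)) ^ 2 := by
      refine hi.trans ?_
      rw [hRLB i, minErase]
      exact Finset.inf'_le _ (Finset.mem_erase.mpr ⟨hcne, Finset.mem_univ c⟩)
    have hble : Real.sqrt (p i c) ≤ Real.sqrt (p i (cstar i)) :=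
      Real.sqrt_le_sqrt (hcstar i c)
    have hblt : Real.sqrt (p i c) < Real.sqrt (p i (cstar i)) := by
      rcases lt_or_eq_of_le hble with h | h
      · exact h
      · exfalso
        rw [h] at hi'
        simp at hi'
        linarith
    -- classical bound
    have hclass := URA.classical_bound (p i) q (hpc0) (fun c' => (hqc c').2)
      hpsum hqsum (cstar i) c hcne hblt hcon
    -- measured fidelity bound
    have hmeas := URA.measured_bound (ρ i) σ (hρ i).1 hσ.1 Nc hNpsd hNsum
    have hmeas' : rootFidelity (ρ i) σ ≤ ∑ c', Real.sqrt (p i c') * Real.sqrt (q c') := by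
      refine hmeas.trans_eq (Finset.sum_congr rfl fun c' _ => ?_)
      rw [← hpc c']
    have hfidle2 : fidelity (ρ i) σ ≤ (∑ c', Real.sqrt (p i c') * Real.sqrt (q c'))^2 := by
      rw [fidelity]
      exact pow_le_pow_left₀ (URA.rootFidelity_nonneg _ _) hmeas' 2
    linarith
  constructor
  · refine Finset.card_le_card fun i him => ?_
    rw [Finset.mem_filter] at him ⊢
    exact ⟨Finset.mem_univ i, key i him.2⟩
  · have hsplitcard :
        (Finset.univ.filter fun i => ε ≤ εRLB i).card
          + (Finset.univ.filter fun i => ε > εRLB i).card = m := by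
      have h1 : (Finset.univ.filter fun i => ε > εRLB i)
          = (Finset.univ.filter fun i : Fin m => ¬ (ε ≤ εRLB i)) := by
        refine Finset.filter_congr fun i _ => ?_
        simp [not_le]
      rw [h1, Finset.card_filter_add_card_filter_not, Finset.card_fin]
    have hle1 : (Finset.univ.filter fun i => ε ≤ εRLB i).card ≤
        (Finset.univ.filter fun i => Robust i).card := by
      refine Finset.card_le_card fun i him => ?_
      rw [Finset.mem_filter] at him ⊢
      exact ⟨Finset.mem_univ i, key i him.2⟩
    set t := (Finset.univ.filter fun i => ε ≤ εRLB i).card with htdef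
    set r := (Finset.univ.filter fun i => ε > εRLB i).card with hrdef
    set R := (Finset.univ.filter fun i => Robust i).card with hRdef
    have hmr : (r : ℝ) = m - t := by
      have : (t : ℝ) + r = m := by exact_mod_cast hsplitcard
      linarith
    have hmpos : (0:ℝ) < m := by exact_mod_cast hm
    rw [hmr]
    have e : 1 - ((m:ℝ) - t)/m = t/m := by field_simp; ring
    rw [e]
    have : (t : ℝ) ≤ R := by exact_mod_cast hle1
    exact div_le_div_of_nonneg_right this hmpos.le
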